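/- Let C ⊆ ℝⁿ be a compact forward invariant set for the system ẋ = f(x), where f : ℝⁿ → ℝⁿ is C². Suppose that for every x ∈ C and every unit vector θ (‖θ‖ = 1) with K_j(x,θ) ≥ 0 for all j ∈ {1,…,m}, the following holds for each i: if K_i(x,θ) = 0, then the total derivative of K_i at (x,θ) applied to the vector (f(x), Df(x)θ) is strictly positive. Then the system is strictly differentially positive on C: there exist T > 0 and ε > 0 such that for every solution x(·) of ẋ = f(x) with x(0) ∈ C, every solution δx(·) of the variational equation d/dt δx(t) = Df(x(t)) δx(t) with δx(0) ∈ K(x(0))\{0}, and every t ≥ T, one has K_i(x(t), δx(t)/‖δx(t)‖) ≥ ε for all i, i.e. δx(t) ∈ K_ε(x(t)). -/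

import Mathlib

set_option maxHeartbeats 2000000

open Set Filter Topology

lemma aux_inv {m : ℕ} (g d : Fin m → ℝ → ℝ) (b : ℝ) (hb : 0 ≤ b)
    (hg : ∀ i, ∀ t ∈ Set.Icc (0:ℝ) b, HasDerivWithinAt (g i) (d i t) (Set.Icc 0 b) t)
    (hpos : ∀ t ∈ Set.Icc (0:ℝ) b, (∀ j, 0 ≤ g j t) → ∀ i, g i t = 0 → 0 < d i t)
    (h0 : ∀ j, 0 ≤ g j 0) :
    (∀ t ∈ Set.Icc (0:ℝ) b, ∀ j, 0 ≤ g j t) ∧ (∀ t ∈ Set.Ioc (0:ℝ) b, ∀ j, 0 < g j t) := by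
  have part1 : ∀ t ∈ Icc (0:ℝ) b, ∀ j, 0 ≤ g j t := by
    set S : Set ℝ := {t | t ∈ Icc 0 b ∧ ∀ s ∈ Icc 0 t, ∀ j, 0 ≤ g j s} with hS
    have h0S : (0:ℝ) ∈ S := ⟨⟨le_refl 0, hb⟩, fun s hs j => by
      have : s = 0 := le_antisymm hs.2 hs.1
      rw [this]; exact h0 j⟩
    have hSne : S.Nonempty := ⟨0, h0S⟩
    have hSbdd : BddAbove S := ⟨b, fun t ht => ht.1.2⟩
    set c := sSup S with hc
    have hc0 : 0 ≤ c := le_csSup hSbdd h0S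
    have hcb : c ≤ b := csSup_le hSne fun t ht => ht.1.2
    have hlt : ∀ s ∈ Ico (0:ℝ) c, ∀ j, 0 ≤ g j s := by
      intro s hs j
      obtain ⟨t, htS, hst⟩ := exists_lt_of_lt_csSup hSne hs.2
      exact htS.2 s ⟨hs.1, hst.le⟩ j
    have hcmem : ∀ s ∈ Icc (0:ℝ) c, ∀ j, 0 ≤ g j s := by
      intro s hs j
      rcases eq_or_lt_of_le hs.2 with heq | hlt'
      · rcases eq_or_lt_of_le hc0 with heq2 | hc0'
        · rw [heq, ← heq2]; exact h0 j
        · rw [heq]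
          have hco : ContinuousWithinAt (g j) (Icc 0 b) c :=
            (hg j c ⟨hc0, hcb⟩).continuousWithinAt
          have h1 : Tendsto (g j) (𝓝[<] c) (𝓝 (g j c)) := by
            refine hco.mono_left ?_
            rw [← nhdsWithin_Ico_eq_nhdsLT hc0']
            exact nhdsWithin_mono c (fun r hr => ⟨hr.1, hr.2.le.trans hcb⟩)
          refine ge_of_tendsto h1 ?_
          filter_upwards [Ioo_mem_nhdsLT_of_mem (⟨hc0', le_refl c⟩ : c ∈ Ioc 0 c)] with r hr
          exact hlt r ⟨hr.1.le, hr.2⟩ j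
      · exact hlt s ⟨hs.1, hlt'⟩ j
    have hceq : c = b := by
      by_contra hne
      have hclt : c < b := lt_of_le_of_ne hcb hne
      have hj : ∀ j, ∀ᶠ s in 𝓝[>] c, 0 ≤ g j s := by
        intro j
        have hgc0 : 0 ≤ g j c := hcmem c ⟨hc0, le_refl c⟩ j
        rcases eq_or_lt_of_le hgc0 with heq | hpos'
        · have hd := hpos c ⟨hc0, hcb⟩ (fun j' => hcmem c ⟨hc0, le_refl c⟩ j') j heq.symm
          have hs := hasDerivWithinAt_iff_tendsto_slope.1 (hg j c ⟨hc0, hcb⟩)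
          have hs' : Tendsto (slope (g j) c) (𝓝[>] c) (𝓝 (d j c)) := by
            refine hs.mono_left ?_
            rw [← nhdsWithin_Ioc_eq_nhdsGT hclt]
            exact nhdsWithin_mono c (fun r hr =>
              ⟨⟨hc0.trans hr.1.le, hr.2⟩, ne_of_gt hr.1⟩)
          filter_upwards [hs'.eventually (eventually_gt_nhds hd), self_mem_nhdsWithin]
            with s hslope hcs
          have h2 : (0:ℝ) < s - c := sub_pos.2 hcs
          have h3 := mul_pos hslope h2
          rw [slope_def_field, div_mul_cancel₀ _ (ne_of_gt h2)] at h3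
          linarith [h3, heq]
        · have hco : ContinuousWithinAt (g j) (Icc 0 b) c :=
            (hg j c ⟨hc0, hcb⟩).continuousWithinAt
          have h1 : Tendsto (g j) (𝓝[>] c) (𝓝 (g j c)) := by
            refine hco.mono_left ?_
            rw [← nhdsWithin_Ioc_eq_nhdsGT hclt]
            exact nhdsWithin_mono c (fun r hr => ⟨hc0.trans hr.1.le, hr.2⟩)
          filter_upwards [h1.eventually (eventually_gt_nhds hpos')] with s hs
          exact hs.le
      obtain ⟨u, hu, husub⟩ := mem_nhdsGT_iff_exists_Ioo_subset.1
        (eventually_all.2 hj)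
      have hcu : c < u := hu
      set t' := min ((c + u) / 2) b with ht'
      have hct' : c < t' := lt_min (by linarith) hclt
      have ht'S : t' ∈ S := by
        refine ⟨⟨hc0.trans hct'.le, min_le_right _ _⟩, fun s hs j => ?_⟩
        rcases le_or_gt s c with h | h
        · exact hcmem s ⟨hs.1, h⟩ j
        · have hsu : s < u := by
            have := hs.2.trans (min_le_left _ _)
            linarith
          exact husub ⟨h, hsu⟩ j
      have := le_csSup hSbdd ht'S
      linarith
    intro t ht j
    exact hcmem t ⟨ht.1, ht.2.trans hceq.ge⟩ j
  refine ⟨part1, ?_⟩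
  intro t ht j
  by_contra hle
  push_neg at hle
  have heq : g j t = 0 := le_antisymm hle (part1 t ⟨ht.1.le, ht.2⟩ j)
  have hd := hpos t ⟨ht.1.le, ht.2⟩ (part1 t ⟨ht.1.le, ht.2⟩) j heq
  have hs := hasDerivWithinAt_iff_tendsto_slope.1 (hg j t ⟨ht.1.le, ht.2⟩)
  have hs' : Tendsto (slope (g j) t) (𝓝[<] t) (𝓝 (d j t)) := by
    refine hs.mono_left ?_
    rw [← nhdsWithin_Ico_eq_nhdsLT ht.1]
    exact nhdsWithin_mono t (fun r hr => ⟨⟨hr.1, hr.2.le.trans ht.2⟩, ne_of_lt hr.2⟩)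
  have hnonpos : ∀ᶠ s in 𝓝[<] t, slope (g j) t s ≤ 0 := by
    filter_upwards [Ioo_mem_nhdsLT_of_mem (⟨ht.1, le_refl t⟩ : t ∈ Ioc 0 t)] with s hs2
    have h1 : 0 ≤ g j s := part1 s ⟨hs2.1.le, hs2.2.le.trans ht.2⟩ j
    rw [slope_def_field]
    apply div_nonpos_iff.2
    left
    exact ⟨by linarith [heq], by linarith [hs2.2]⟩
  have := le_of_tendsto hs' hnonpos
  linarith

lemma aux_scale {E : Type*} [NormedAddCommGroup E] [NormedSpace ℝ E]
    (G : E × E → ℝ) (x v : E) (hv : v ≠ 0) (ρ : ℝ) (hρ : 0 < ρ)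
    (hG : DifferentiableAt ℝ G (x, ρ • v))
    (hhom : ∀ y w : E, w ≠ 0 → G (y, ρ • w) = G (y, w)) (a b : E) :
    fderiv ℝ G (x, ρ • v) (a, ρ • b) = fderiv ℝ G (x, v) (a, b) := by
  set S : (E × E) →L[ℝ] (E × E) :=
    (ContinuousLinearMap.fst ℝ E E).prod (ρ • ContinuousLinearMap.snd ℝ E E) with hSdef
  have hSapp : ∀ p : E × E, S p = (p.1, ρ • p.2) := fun p => rfl
  have hSv : S (x, v) = (x, ρ • v) := rfl
  have hcomp : HasFDerivAt (G ∘ S) ((fderiv ℝ G (x, ρ • v)).comp S) (x, v) := by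
    have h1 := hG.hasFDerivAt
    rw [← hSv] at h1
    exact h1.comp (x, v) S.hasFDerivAt
  have heq : (G ∘ S) =ᶠ[𝓝 (x, v)] G := by
    have hU : {p : E × E | p.2 ≠ 0} ∈ 𝓝 (x, v) :=
      (isOpen_compl_singleton.preimage continuous_snd).mem_nhds hv
    filter_upwards [hU] with p hp
    show G (S p) = G p
    rw [hSapp]
    exact hhom p.1 p.2 hp
  have hfe : fderiv ℝ G (x, v) = (fderiv ℝ G (x, ρ • v)).comp S := by
    rw [← heq.fderiv_eq, hcomp.fderiv]
  rw [hfe]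
  rfl

abbrev Esp (n : ℕ) := EuclideanSpace ℝ (Fin n)



open Set

/-- The cone at `x` determined by the cone-field representation functions `K i`:
`K(x) = {0} ∪ {v ≠ 0 : K_i(x,v) ≥ 0 for all i}`. -/
def coneAt {n m : ℕ} (K : Fin m → EuclideanSpace ℝ (Fin n) → EuclideanSpace ℝ (Fin n) → ℝ)
    (x : EuclideanSpace ℝ (Fin n)) : Set (EuclideanSpace ℝ (Fin n)) :=
  insert 0 {v | v ≠ 0 ∧ ∀ i, 0 ≤ K i x v}

/-- **Theorem 3 (strict differential positivity on compact sets from strict pointwise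
geometric conditions).** Let `C` be a compact forward invariant set. If for every `x ∈ C`
and every unit vector `θ` in the cone `K(x)` with an active constraint `K_i(x,θ) = 0`, the
derivative of `K_i` along the prolonged vector field `(f(x), Df(x)θ)` is strictly positive,
then the system is strictly differentially positive on `C`: there exist `T > 0` and `ε > 0`
such that every solution of the variational equation starting in `K(x(0)) \ {0}` satisfies
`δx(t)/‖δx(t)‖ ∈ K_ε(x(t))` for all `t ≥ T`. -/
theorem strict_differential_positivity_compact {n m : ℕ}
    (f : EuclideanSpace ℝ (Fin n) → EuclideanSpace ℝ (Fin n))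
    (hf : ContDiff ℝ 2 f)
    (C : Set (EuclideanSpace ℝ (Fin n)))
    (hCcompact : IsCompact C)
    (hC : ∀ x : ℝ → EuclideanSpace ℝ (Fin n),
      (∀ t, HasDerivAt x (f (x t)) t) → x 0 ∈ C → ∀ t, 0 ≤ t → x t ∈ C)
    (K : Fin m → EuclideanSpace ℝ (Fin n) → EuclideanSpace ℝ (Fin n) → ℝ)
    (hKsmooth : ∀ i, ∀ x v : EuclideanSpace ℝ (Fin n), v ≠ 0 →
      DifferentiableAt ℝ
        (fun p : EuclideanSpace ℝ (Fin n) × EuclideanSpace ℝ (Fin n) => K i p.1 p.2) (x, v))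
    (hKhom : ∀ i, ∀ x v : EuclideanSpace ℝ (Fin n), v ≠ 0 → ∀ ρ : ℝ, 0 < ρ →
      K i x (ρ • v) = K i x v)
    (hKclosed : ∀ x, IsClosed (coneAt K x))
    (hKconvex : ∀ x, Convex ℝ (coneAt K x))
    (hKpointed : ∀ x, coneAt K x ∩ (-coneAt K x) = {0})
    (hKsolid : ∀ x, (interior (coneAt K x)).Nonempty)
    (hgeom : ∀ x ∈ C, ∀ θ : EuclideanSpace ℝ (Fin n), ‖θ‖ = 1 → (∀ j, 0 ≤ K j x θ) →
      ∀ i, K i x θ = 0 →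
      0 < fderiv ℝ
        (fun p : EuclideanSpace ℝ (Fin n) × EuclideanSpace ℝ (Fin n) => K i p.1 p.2)
        (x, θ) (f x, fderiv ℝ f x θ)) :
    ∃ T > (0:ℝ), ∃ ε > (0:ℝ),
      ∀ x : ℝ → EuclideanSpace ℝ (Fin n),
        (∀ t, HasDerivAt x (f (x t)) t) → x 0 ∈ C →
      ∀ δx : ℝ → EuclideanSpace ℝ (Fin n),
        (∀ t, HasDerivAt δx (fderiv ℝ f (x t) (δx t)) t) →
        δx 0 ∈ coneAt K (x 0) \ {0} →
      ∀ t, T ≤ t → ∀ i, ε ≤ K i (x t) (‖δx t‖⁻¹ • δx t) := by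
  classical
  set F : Esp n × Esp n → Esp n × Esp n := fun p => (f p.1, fderiv ℝ f p.1 p.2) with hFdef
  -- smoothness of the prolonged field
  have hdf : ContDiff ℝ 1 (fderiv ℝ f) := hf.fderiv_right (by norm_num)
  have hFc1 : ContDiff ℝ 1 F := by
    refine ContDiff.prodMk ?_ ?_
    · exact (hf.of_le one_le_two).comp contDiff_fst
    · exact (hdf.comp contDiff_fst).clm_apply contDiff_snd
  have hFcont : Continuous F := hFc1.continuous
  -- bound on Df over C
  obtain ⟨M₀, hM₀⟩ : ∃ M₀, ∀ y ∈ C, ‖fderiv ℝ f y‖ ≤ M₀ :=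
    hCcompact.exists_bound_of_continuousOn (hf.continuous_fderiv (by norm_num)).continuousOn
  set M := max M₀ 0 with hMdef
  have hM0 : (0:ℝ) ≤ M := le_max_right _ _
  have hMb : ∀ y ∈ C, ‖fderiv ℝ f y‖ ≤ M := fun y hy => (hM₀ y hy).trans (le_max_left _ _)
  -- norm upper bound along solutions
  have hub : ∀ x v : ℝ → Esp n, (∀ t, HasDerivAt x (f (x t)) t) → x 0 ∈ C →
      (∀ t, HasDerivAt v (fderiv ℝ f (x t) (v t)) t) →
      ∀ t, 0 ≤ t → ‖v t‖ ≤ ‖v 0‖ * Real.exp (M * t) := by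
    intro x v hx hxC hv t ht
    have h := norm_le_gronwallBound_of_norm_deriv_right_le (f := v)
      (f' := fun s => fderiv ℝ f (x s) (v s)) (δ := ‖v 0‖) (K := M) (ε := 0) (a := 0) (b := t)
      (fun s _ => (hv s).continuousAt.continuousWithinAt)
      (fun s _ => (hv s).hasDerivWithinAt) le_rfl ?_ t ⟨ht, le_rfl⟩
    · rwa [gronwallBound_ε0, sub_zero] at h
    · intro s hs
      have hxs : x s ∈ C := hC x hx hxC s hs.1
      calc ‖fderiv ℝ f (x s) (v s)‖ ≤ ‖fderiv ℝ f (x s)‖ * ‖v s‖ :=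
            ContinuousLinearMap.le_opNorm _ _
        _ ≤ M * ‖v s‖ + 0 := by
            rw [add_zero]
            exact mul_le_mul_of_nonneg_right (hMb _ hxs) (norm_nonneg _)
  -- norm lower bound along solutions
  have hlb : ∀ x v : ℝ → Esp n, (∀ t, HasDerivAt x (f (x t)) t) → x 0 ∈ C →
      (∀ t, HasDerivAt v (fderiv ℝ f (x t) (v t)) t) →
      ∀ t, 0 ≤ t → ‖v 0‖ ≤ ‖v t‖ * Real.exp (M * t) := by
    intro x v hx hxC hv t ht
    have hw : ∀ s : ℝ, HasDerivAt (fun r => v (t - r))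
        ((-1 : ℝ) • fderiv ℝ f (x (t - s)) (v (t - s))) s := by
      intro s
      exact (hv (t - s)).scomp s (((hasDerivAt_id s).const_sub t))
    have h := norm_le_gronwallBound_of_norm_deriv_right_le (f := fun r => v (t - r))
      (f' := fun s => (-1 : ℝ) • fderiv ℝ f (x (t - s)) (v (t - s)))
      (δ := ‖v t‖) (K := M) (ε := 0) (a := 0) (b := t)
      (fun s _ => (hw s).continuousAt.continuousWithinAt)
      (fun s _ => (hw s).hasDerivWithinAt) (by simp) ?_ t ⟨ht, le_rfl⟩
    · rw [gronwallBound_ε0, sub_zero] at h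
      simpa using h
    · intro s hs
      have hts : (0:ℝ) ≤ t - s := by linarith [hs.2]
      have hxs : x (t - s) ∈ C := hC x hx hxC (t - s) hts
      rw [norm_smul]
      calc ‖(-1 : ℝ)‖ * ‖fderiv ℝ f (x (t - s)) (v (t - s))‖
          = ‖fderiv ℝ f (x (t - s)) (v (t - s))‖ := by norm_num
        _ ≤ ‖fderiv ℝ f (x (t - s))‖ * ‖v (t - s)‖ := ContinuousLinearMap.le_opNorm _ _
        _ ≤ M * ‖v (t - s)‖ + 0 := by
            rw [add_zero]
            exact mul_le_mul_of_nonneg_right (hMb _ hxs) (norm_nonneg _)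
  -- central positivity lemma along interval solutions of the prolonged system
  have hcentral : ∀ b : ℝ, 0 ≤ b → ∀ Y : ℝ → Esp n × Esp n,
      (∀ t ∈ Icc (0:ℝ) b, HasDerivWithinAt Y (F (Y t)) (Icc 0 b) t) →
      (∀ t ∈ Icc (0:ℝ) b, (Y t).1 ∈ C) →
      (∀ t ∈ Icc (0:ℝ) b, (Y t).2 ≠ 0) →
      (∀ j, 0 ≤ K j (Y 0).1 (Y 0).2) →
      (∀ t ∈ Icc (0:ℝ) b, ∀ j, 0 ≤ K j (Y t).1 (Y t).2) ∧
        (∀ t ∈ Ioc (0:ℝ) b, ∀ j, 0 < K j (Y t).1 (Y t).2) := by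
    intro b hb Y hY hYC hYn hY0
    have hmk : ∀ t, ((Y t).1, (Y t).2) = Y t := fun t => rfl
    have hchain : ∀ j, ∀ t ∈ Icc (0:ℝ) b, HasDerivWithinAt (fun s => K j (Y s).1 (Y s).2)
        (fderiv ℝ (fun p : Esp n × Esp n => K j p.1 p.2) (Y t) (F (Y t))) (Icc 0 b) t := by
      intro j t htm
      have hd := hKsmooth j (Y t).1 (Y t).2 (hYn t htm)
      rw [hmk t] at hd
      exact hd.hasFDerivAt.comp_hasDerivWithinAt t (hY t htm)
    have := aux_inv (fun j s => K j (Y s).1 (Y s).2)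
      (fun j t => fderiv ℝ (fun p : Esp n × Esp n => K j p.1 p.2) (Y t) (F (Y t)))
      b hb (fun j t htm => hchain j t htm) ?_ hY0
    · exact this
    · intro t htm hge i hi0
      set x0 := (Y t).1 with hx0
      set v0 := (Y t).2 with hv0
      have hne : v0 ≠ 0 := hYn t htm
      have hρ : (0:ℝ) < ‖v0‖ := norm_pos_iff.2 hne
      set θ : Esp n := ‖v0‖⁻¹ • v0 with hθ
      have hθn : ‖θ‖ = 1 := by
        rw [hθ, norm_smul, norm_inv, norm_norm, inv_mul_cancel₀ (ne_of_gt hρ)]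
      have hθne : θ ≠ 0 := by
        intro h; rw [h, norm_zero] at hθn; exact one_ne_zero hθn.symm
      have hKθ : ∀ j, K j x0 θ = K j x0 v0 := fun j => hKhom j x0 v0 hne _ (inv_pos.2 hρ)
      have hrecover : ‖v0‖ • θ = v0 := smul_inv_smul₀ (ne_of_gt hρ) v0
      have hgeo := hgeom x0 (hYC t htm) θ hθn (fun j => (hKθ j).symm ▸ hge j) i
        (by rw [hKθ i]; exact hi0)
      have hdiff : DifferentiableAt ℝ (fun p : Esp n × Esp n => K i p.1 p.2)
          (x0, ‖v0‖ • θ) := by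
        rw [hrecover]; exact hKsmooth i x0 v0 hne
      have hscale := aux_scale (fun p : Esp n × Esp n => K i p.1 p.2) x0 θ hθne ‖v0‖ hρ
        hdiff (fun y w hw => hKhom i y w hw _ hρ) (f x0) (fderiv ℝ f x0 θ)
      have hsmul : fderiv ℝ f x0 v0 = ‖v0‖ • fderiv ℝ f x0 θ := by
        rw [← (fderiv ℝ f x0).map_smul, hrecover]
      show 0 < fderiv ℝ (fun p : Esp n × Esp n => K i p.1 p.2) (Y t) (F (Y t))
      have hYt : Y t = (x0, ‖v0‖ • θ) := by rw [hrecover]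
      have hFYt : F (x0, ‖v0‖ • θ) = (f x0, ‖v0‖ • fderiv ℝ f x0 θ) := by
        show (f x0, fderiv ℝ f x0 (‖v0‖ • θ)) = _
        rw [(fderiv ℝ f x0).map_smul]
      rw [hYt, hFYt, hscale]
      exact hgeo
  -- key claim at time 1
  have hkey : ∃ ε > (0:ℝ), ∀ x : ℝ → Esp n, (∀ t, HasDerivAt x (f (x t)) t) → x 0 ∈ C →
      ∀ v : ℝ → Esp n, (∀ t, HasDerivAt v (fderiv ℝ f (x t) (v t)) t) →
      ‖v 0‖ = 1 → (∀ j, 0 ≤ K j (x 0) (v 0)) → ∀ i, ε ≤ K i (x 1) (v 1) := by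
    by_contra hcon
    push_neg at hcon
    have hbad : ∀ k : ℕ, ∃ x : ℝ → Esp n, (∀ t, HasDerivAt x (f (x t)) t) ∧ x 0 ∈ C ∧
        ∃ v : ℝ → Esp n, (∀ t, HasDerivAt v (fderiv ℝ f (x t) (v t)) t) ∧ ‖v 0‖ = 1 ∧
        (∀ j, 0 ≤ K j (x 0) (v 0)) ∧ ∃ i, K i (x 1) (v 1) < 1/((k:ℝ)+1) := by
      intro k
      obtain ⟨x, hx, hxC, v, hv, hvn, hvc, i, hiv⟩ := hcon (1/((k:ℝ)+1)) (by positivity)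
      exact ⟨x, hx, hxC, v, hv, hvn, hvc, i, hiv⟩
    choose X hX hXC V hV hVn hVc I hI using hbad
    set Y : ℕ → ℝ → Esp n × Esp n := fun k t => (X k t, V k t) with hYdef
    have hI01 : (0:ℝ) ∈ Icc (0:ℝ) 1 := ⟨le_rfl, zero_le_one⟩
    have hI11 : (1:ℝ) ∈ Icc (0:ℝ) 1 := ⟨zero_le_one, le_rfl⟩
    have hYQ : ∀ k, ∀ t ∈ Icc (0:ℝ) 1, Y k t ∈ C ×ˢ Metric.closedBall (0:Esp n) (Real.exp M) := by
      intro k t ht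
      refine ⟨hC (X k) (hX k) (hXC k) t ht.1, ?_⟩
      rw [Metric.mem_closedBall, dist_zero_right]
      calc ‖V k t‖ ≤ ‖V k 0‖ * Real.exp (M * t) := hub (X k) (V k) (hX k) (hXC k) (hV k) t ht.1
        _ = Real.exp (M * t) := by rw [hVn k, one_mul]
        _ ≤ Real.exp M := Real.exp_le_exp.2 (by nlinarith [ht.1, ht.2, hM0])
    have hVlow : ∀ k, ∀ t ∈ Icc (0:ℝ) 1, (Real.exp M)⁻¹ ≤ ‖V k t‖ := by
      intro k t ht
      have h1 := hlb (X k) (V k) (hX k) (hXC k) (hV k) t ht.1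
      rw [hVn k] at h1
      have h2 : Real.exp (M * t) ≤ Real.exp M := Real.exp_le_exp.2 (by nlinarith [ht.1, ht.2, hM0])
      have h3 : (1:ℝ) ≤ ‖V k t‖ * Real.exp M := by
        calc (1:ℝ) ≤ ‖V k t‖ * Real.exp (M * t) := h1
          _ ≤ ‖V k t‖ * Real.exp M := mul_le_mul_of_nonneg_left h2 (norm_nonneg _)
      rw [inv_le_iff_one_le_mul₀ (Real.exp_pos M)]
      linarith
    -- bounding region
    obtain ⟨R₀, hR₀⟩ : ∃ R₀, ∀ y ∈ C, ‖y‖ ≤ R₀ :=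
      hCcompact.exists_bound_of_continuousOn continuousOn_id
    set R := max R₀ (Real.exp M) with hRdef
    have hQR : C ×ˢ Metric.closedBall (0:Esp n) (Real.exp M) ⊆
        Metric.closedBall (0 : Esp n × Esp n) R := by
      intro p hp
      rw [Metric.mem_closedBall, dist_zero_right, Prod.norm_def]
      refine max_le ((hR₀ p.1 hp.1).trans (le_max_left _ _)) ?_
      have := hp.2
      rw [Metric.mem_closedBall, dist_zero_right] at this
      exact this.trans (le_max_right _ _)
    -- Lipschitz constant and bound for F on the region
    obtain ⟨L₀, hL₀⟩ : ∃ L₀, ∀ q ∈ Metric.closedBall (0 : Esp n × Esp n) R, ‖fderiv ℝ F q‖ ≤ L₀ :=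
      (isCompact_closedBall _ _).exists_bound_of_continuousOn
        (hFc1.continuous_fderiv one_ne_zero).continuousOn
    set L := max L₀ 0 with hLdef
    have hL0 : (0:ℝ) ≤ L := le_max_right _ _
    have hFlip : ∀ p ∈ Metric.closedBall (0 : Esp n × Esp n) R,
        ∀ q ∈ Metric.closedBall (0 : Esp n × Esp n) R, ‖F p - F q‖ ≤ L * ‖p - q‖ := by
      intro p hp q hq
      exact Convex.norm_image_sub_le_of_norm_fderiv_le
        (fun z _ => hFc1.differentiable one_ne_zero z)
        (fun z hz => (hL₀ z hz).trans (le_max_left _ _))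
        (convex_closedBall _ _) hq hp
    obtain ⟨B₀, hB₀⟩ : ∃ B₀, ∀ q ∈ Metric.closedBall (0 : Esp n × Esp n) R, ‖F q‖ ≤ B₀ :=
      (isCompact_closedBall _ _).exists_bound_of_continuousOn hFcont.continuousOn
    set B := max B₀ 0 with hBdef
    have hB0 : (0:ℝ) ≤ B := le_max_right _ _
    have hFB : ∀ q ∈ Metric.closedBall (0 : Esp n × Esp n) R, ‖F q‖ ≤ B :=
      fun q hq => (hB₀ q hq).trans (le_max_left _ _)
    have hYd : ∀ k t, HasDerivAt (Y k) (F (Y k t)) t := fun k t => (hX k t).prodMk (hV k t)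
    -- Gronwall comparison between two members of the family
    have hGron : ∀ k l : ℕ, ∀ t ∈ Icc (0:ℝ) 1,
        ‖Y k t - Y l t‖ ≤ ‖Y k 0 - Y l 0‖ * Real.exp (L * t) := by
      intro k l t ht
      have h := norm_le_gronwallBound_of_norm_deriv_right_le
        (f := fun s => Y k s - Y l s) (f' := fun s => F (Y k s) - F (Y l s))
        (δ := ‖Y k 0 - Y l 0‖) (K := L) (ε := 0) (a := 0) (b := 1)
        (fun s _ => ((hYd k s).sub (hYd l s)).continuousAt.continuousWithinAt)
        (fun s _ => ((hYd k s).sub (hYd l s)).hasDerivWithinAt) le_rfl ?_ t ht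
      · rwa [gronwallBound_ε0, sub_zero] at h
      · intro s hs
        have hs' : s ∈ Icc (0:ℝ) 1 := ⟨hs.1, hs.2.le⟩
        rw [add_zero]
        exact hFlip _ (hQR (hYQ k s hs')) _ (hQR (hYQ l s hs'))
    -- compactness: extract a convergent subsequence of initial conditions
    have hQcomp : IsCompact (C ×ˢ Metric.closedBall (0:Esp n) (Real.exp M)) :=
      hCcompact.prod (isCompact_closedBall _ _)
    obtain ⟨pst, _, φ, hφmono, hφtend⟩ :=
      hQcomp.tendsto_subseq (fun k => hYQ k 0 hI01)
    have hpCauchy : CauchySeq (fun k => Y (φ k) 0) := hφtend.cauchySeq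
    have hYCauchy : ∀ t ∈ Icc (0:ℝ) 1, CauchySeq (fun k => Y (φ k) t) := by
      intro t ht
      rw [Metric.cauchySeq_iff]
      intro ε' hε'
      obtain ⟨N, hN⟩ := Metric.cauchySeq_iff.1 hpCauchy (ε' / Real.exp L)
        (by positivity)
      refine ⟨N, fun a ha b hb => ?_⟩
      have h1 := hGron (φ a) (φ b) t ht
      have h2 : Real.exp (L * t) ≤ Real.exp L := Real.exp_le_exp.2 (by nlinarith [ht.1, ht.2, hL0])
      have h3 := hN a ha b hb
      rw [dist_eq_norm] at h3 ⊢
      have h4 : ‖Y (φ a) t - Y (φ b) t‖ ≤ ‖Y (φ a) 0 - Y (φ b) 0‖ * Real.exp L := by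
        calc ‖Y (φ a) t - Y (φ b) t‖ ≤ ‖Y (φ a) 0 - Y (φ b) 0‖ * Real.exp (L * t) := h1
          _ ≤ ‖Y (φ a) 0 - Y (φ b) 0‖ * Real.exp L :=
            mul_le_mul_of_nonneg_left h2 (norm_nonneg _)
      calc ‖Y (φ a) t - Y (φ b) t‖ ≤ ‖Y (φ a) 0 - Y (φ b) 0‖ * Real.exp L := h4
        _ < (ε' / Real.exp L) * Real.exp L :=
          mul_lt_mul_of_pos_right h3 (Real.exp_pos L)
        _ = ε' := div_mul_cancel₀ ε' (ne_of_gt (Real.exp_pos L))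
    -- the limit curve
    have hlimex : ∀ t : ℝ, ∃ q : Esp n × Esp n,
        t ∈ Icc (0:ℝ) 1 → Tendsto (fun k => Y (φ k) t) atTop (𝓝 q) := by
      intro t
      by_cases ht : t ∈ Icc (0:ℝ) 1
      · obtain ⟨q, hq⟩ := cauchySeq_tendsto_of_complete (hYCauchy t ht)
        exact ⟨q, fun _ => hq⟩
      · exact ⟨0, fun h => absurd h ht⟩
    choose Yl hYl using hlimex
    have hYlQ : ∀ t ∈ Icc (0:ℝ) 1, Yl t ∈ C ×ˢ Metric.closedBall (0:Esp n) (Real.exp M) :=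
      fun t ht => hQcomp.isClosed.mem_of_tendsto (hYl t ht)
        (Eventually.of_forall fun k => hYQ (φ k) t ht)
    have hYlC : ∀ t ∈ Icc (0:ℝ) 1, (Yl t).1 ∈ C := fun t ht => (hYlQ t ht).1
    have hYllow : ∀ t ∈ Icc (0:ℝ) 1, (Real.exp M)⁻¹ ≤ ‖(Yl t).2‖ := by
      intro t ht
      have htd : Tendsto (fun k => ‖(Y (φ k) t).2‖) atTop (𝓝 ‖(Yl t).2‖) :=
        ((continuous_norm.comp continuous_snd).tendsto (Yl t)).comp (hYl t ht)
      exact ge_of_tendsto htd (Eventually.of_forall fun k => hVlow (φ k) t ht)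
    have hYlne : ∀ t ∈ Icc (0:ℝ) 1, (Yl t).2 ≠ 0 := by
      intro t ht h0
      have := hYllow t ht
      rw [h0, norm_zero] at this
      exact absurd this (not_le.2 (inv_pos.2 (Real.exp_pos M)))
    -- quantitative bounds toward differentiability of the limit
    have hstep : ∀ k, ∀ s ∈ Icc (0:ℝ) 1, ∀ t ∈ Icc (0:ℝ) 1,
        ‖Y (φ k) t - Y (φ k) s‖ ≤ B * ‖t - s‖ := by
      intro k s hs t ht
      exact Convex.norm_image_sub_le_of_norm_hasDerivWithin_le
        (fun r hr => (hYd (φ k) r).hasDerivWithinAt)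
        (fun r hr => hFB _ (hQR (hYQ (φ k) r hr))) (convex_Icc 0 1) hs ht
    have hquad : ∀ k, ∀ s ∈ Icc (0:ℝ) 1, ∀ t ∈ Icc (0:ℝ) 1,
        ‖Y (φ k) t - Y (φ k) s - (t - s) • F (Y (φ k) s)‖ ≤ L * B * ‖t - s‖ * ‖t - s‖ := by
      intro k s hs t ht
      have hI2sub : Icc (min s t) (max s t) ⊆ Icc (0:ℝ) 1 :=
        Icc_subset_Icc (le_min hs.1 ht.1) (max_le hs.2 ht.2)
      have hder : ∀ r ∈ Icc (min s t) (max s t),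
          HasDerivWithinAt (fun u => Y (φ k) u - u • F (Y (φ k) s))
            (F (Y (φ k) r) - F (Y (φ k) s)) (Icc (min s t) (max s t)) r := by
        intro r hr
        have h1 := (hYd (φ k) r).sub ((hasDerivAt_id r).smul_const (F (Y (φ k) s)))
        rw [one_smul] at h1
        exact h1.hasDerivWithinAt
      have hbnd : ∀ r ∈ Icc (min s t) (max s t),
          ‖F (Y (φ k) r) - F (Y (φ k) s)‖ ≤ L * (B * ‖t - s‖) := by
        intro r hr
        have habs : ‖r - s‖ ≤ ‖t - s‖ := by
          rw [Real.norm_eq_abs, Real.norm_eq_abs]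
          rcases le_total s t with h | h
          · rw [min_eq_left h, max_eq_right h] at hr
            rw [abs_of_nonneg (by linarith [hr.1]), abs_of_nonneg (by linarith)]
            linarith [hr.2]
          · rw [min_eq_right h, max_eq_left h] at hr
            rw [abs_of_nonpos (by linarith [hr.2]), abs_of_nonpos (by linarith)]
            linarith [hr.1]
        calc ‖F (Y (φ k) r) - F (Y (φ k) s)‖ ≤ L * ‖Y (φ k) r - Y (φ k) s‖ :=
              hFlip _ (hQR (hYQ (φ k) r (hI2sub hr))) _ (hQR (hYQ (φ k) s hs))
          _ ≤ L * (B * ‖r - s‖) :=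
              mul_le_mul_of_nonneg_left (hstep k s hs r (hI2sub hr)) hL0
          _ ≤ L * (B * ‖t - s‖) :=
              mul_le_mul_of_nonneg_left (mul_le_mul_of_nonneg_left habs hB0) hL0
      have hsI2 : s ∈ Icc (min s t) (max s t) := ⟨min_le_left _ _, le_max_left _ _⟩
      have htI2 : t ∈ Icc (min s t) (max s t) := ⟨min_le_right _ _, le_max_right _ _⟩
      have h2 := Convex.norm_image_sub_le_of_norm_hasDerivWithin_le hder hbnd
        (convex_Icc _ _) hsI2 htI2
      have h3 : Y (φ k) t - t • F (Y (φ k) s) - (Y (φ k) s - s • F (Y (φ k) s))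
          = Y (φ k) t - Y (φ k) s - (t - s) • F (Y (φ k) s) := by
        rw [sub_smul]; abel
      rw [h3] at h2
      calc ‖Y (φ k) t - Y (φ k) s - (t - s) • F (Y (φ k) s)‖ ≤ L * (B * ‖t - s‖) * ‖t - s‖ := h2
        _ = L * B * ‖t - s‖ * ‖t - s‖ := by ring
    -- the limit curve solves the prolonged ODE
    have hYld : ∀ s ∈ Icc (0:ℝ) 1, HasDerivWithinAt Yl (F (Yl s)) (Icc 0 1) s := by
      intro s hs
      have htendF : Tendsto (fun k => F (Y (φ k) s)) atTop (𝓝 (F (Yl s))) :=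
        (hFcont.tendsto (Yl s)).comp (hYl s hs)
      have herr : ∀ t ∈ Icc (0:ℝ) 1,
          ‖Yl t - Yl s - (t - s) • F (Yl s)‖ ≤ L * B * ‖t - s‖ * ‖t - s‖ := by
        intro t ht
        have h1 : Tendsto (fun k => Y (φ k) t - Y (φ k) s - (t - s) • F (Y (φ k) s))
            atTop (𝓝 (Yl t - Yl s - (t - s) • F (Yl s))) :=
          ((hYl t ht).sub (hYl s hs)).sub (htendF.const_smul (t - s))
        exact le_of_tendsto h1.norm (Eventually.of_forall fun k => hquad k s hs t ht)
      rw [hasDerivWithinAt_iff_isLittleO, Asymptotics.isLittleO_iff]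
      intro ε₂ hε₂
      have hev1 : ∀ᶠ t in 𝓝[Icc (0:ℝ) 1] s, ‖t - s‖ ≤ ε₂ / (L * B + 1) := by
        refine eventually_nhdsWithin_of_eventually_nhds ?_
        have hball := Metric.ball_mem_nhds s (show (0:ℝ) < ε₂/(L*B+1) by positivity)
        filter_upwards [hball] with t ht'
        rw [Metric.mem_ball, Real.dist_eq] at ht'
        rw [Real.norm_eq_abs]
        exact ht'.le
      filter_upwards [hev1, self_mem_nhdsWithin] with t h1 h2
      have h4 : ‖t - s‖ * (L * B + 1) ≤ ε₂ := by
        rw [← le_div_iff₀ (by positivity)]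
        exact h1
      have h5 := herr t h2
      nlinarith [norm_nonneg (t - s), mul_nonneg hL0 hB0,
        mul_nonneg (mul_nonneg hL0 hB0) (norm_nonneg (t - s))]
    -- initial cone condition for the limit
    have hYl0K : ∀ j, 0 ≤ K j (Yl 0).1 (Yl 0).2 := by
      intro j
      have hcontK : ContinuousAt (fun p : Esp n × Esp n => K j p.1 p.2) (Yl 0) := by
        have := (hKsmooth j (Yl 0).1 (Yl 0).2 (hYlne 0 hI01)).continuousAt
        rwa [Prod.mk.eta] at this
      have htd : Tendsto (fun k => K j (X (φ k) 0) (V (φ k) 0)) atTop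
          (𝓝 (K j (Yl 0).1 (Yl 0).2)) := hcontK.tendsto.comp (hYl 0 hI01)
      exact ge_of_tendsto htd (Eventually.of_forall fun k => hVc (φ k) j)
    -- strict positivity of the limit at time 1
    have hstrict := (hcentral 1 zero_le_one Yl hYld hYlC hYlne hYl0K).2 1 ⟨one_pos, le_rfl⟩
    -- derive the contradiction
    have hφge : ∀ k : ℕ, (k:ℝ) ≤ (φ k : ℝ) := fun k => Nat.cast_le.2 (hφmono.le_apply)
    have hinvtend : Tendsto (fun k : ℕ => 1/((φ k : ℝ)+1)) atTop (𝓝 0) := by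
      refine squeeze_zero (fun k => by positivity) (fun k => ?_)
        tendsto_one_div_add_atTop_nhds_zero_nat
      exact one_div_le_one_div_of_le (by positivity) (by linarith [hφge k])
    have hev : ∀ᶠ k in atTop, ∀ i, 1/((φ k:ℝ)+1) < K i (X (φ k) 1) (V (φ k) 1) := by
      rw [eventually_all]
      intro i
      have hcontK : ContinuousAt (fun p : Esp n × Esp n => K i p.1 p.2) (Yl 1) := by
        have := (hKsmooth i (Yl 1).1 (Yl 1).2 (hYlne 1 hI11)).continuousAt
        rwa [Prod.mk.eta] at this
      have htK : Tendsto (fun k => K i (X (φ k) 1) (V (φ k) 1)) atTop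
          (𝓝 (K i (Yl 1).1 (Yl 1).2)) := hcontK.tendsto.comp (hYl 1 hI11)
      have hd := htK.sub hinvtend
      rw [sub_zero] at hd
      have hev2 := hd.eventually (eventually_gt_nhds (hstrict i))
      filter_upwards [hev2] with k hk
      linarith
    obtain ⟨k, hk⟩ := hev.exists
    exact absurd (hI (φ k)) (not_lt.2 (hk (I (φ k))).le)
  -- conclusion
  obtain ⟨ε, hε, hkey'⟩ := hkey
  refine ⟨1, one_pos, ε, hε, ?_⟩
  intro x hx hxC δx hδx hδx0 t ht i
  have hδne0 : δx 0 ≠ 0 := by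
    intro h
    exact hδx0.2 (by rw [h]; exact Set.mem_singleton _)
  have hδK0 : ∀ j, 0 ≤ K j (x 0) (δx 0) := by
    rcases Set.mem_insert_iff.1 hδx0.1 with h | h
    · exact absurd h hδne0
    · exact h.2
  have hnz : ∀ s, 0 ≤ s → δx s ≠ 0 := by
    intro s hs h
    have hl := hlb x δx hx hxC hδx s hs
    rw [h, norm_zero, zero_mul] at hl
    exact hδne0 (norm_eq_zero.1 (le_antisymm hl (norm_nonneg _)))
  set c := t - 1 with hcdef
  have hc0 : (0:ℝ) ≤ c := by simp only [hcdef]; linarith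
  have hinv := (hcentral c hc0 (fun s => (x s, δx s))
    (fun s _ => ((hx s).prodMk (hδx s)).hasDerivWithinAt)
    (fun s hs => hC x hx hxC s hs.1)
    (fun s hs => hnz s hs.1) hδK0).1
  have hKc : ∀ j, 0 ≤ K j (x c) (δx c) := hinv c ⟨hc0, le_rfl⟩
  set x' : ℝ → Esp n := fun s => x (s + c) with hx'def
  set v' : ℝ → Esp n := fun s => ‖δx c‖⁻¹ • δx (s + c) with hv'def
  have hδcne : δx c ≠ 0 := hnz c hc0
  have hnc : (0:ℝ) < ‖δx c‖ := norm_pos_iff.2 hδcne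
  have hx' : ∀ s, HasDerivAt x' (f (x' s)) s := by
    intro s
    have h1 := (hx (s + c)).scomp s ((hasDerivAt_id s).add_const c)
    simp only [one_smul] at h1; exact h1
  have hv' : ∀ s, HasDerivAt v' (fderiv ℝ f (x' s) (v' s)) s := by
    intro s
    have h1 := (hδx (s + c)).scomp s ((hasDerivAt_id s).add_const c)
    have h2 := h1.const_smul (‖δx c‖⁻¹)
    have h3 : ‖δx c‖⁻¹ • ((1:ℝ) • fderiv ℝ f (x (s + c)) (δx (s + c)))
        = fderiv ℝ f (x' s) (v' s) := by
      rw [one_smul, ← (fderiv ℝ f (x (s + c))).map_smul]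
    rw [h3] at h2
    exact h2
  have hx'C : x' 0 ∈ C := by
    show x (0 + c) ∈ C
    rw [zero_add]
    exact hC x hx hxC c hc0
  have hv'n : ‖v' 0‖ = 1 := by
    show ‖‖δx c‖⁻¹ • δx (0 + c)‖ = 1
    rw [zero_add, norm_smul, norm_inv, norm_norm, inv_mul_cancel₀ (ne_of_gt hnc)]
  have hv'K : ∀ j, 0 ≤ K j (x' 0) (v' 0) := by
    intro j
    show 0 ≤ K j (x (0 + c)) (‖δx c‖⁻¹ • δx (0 + c))
    rw [zero_add, hKhom j (x c) (δx c) hδcne _ (inv_pos.2 hnc)]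
    exact hKc j
  have hfin : ε ≤ K i (x (1 + c)) (‖δx c‖⁻¹ • δx (1 + c)) :=
    hkey' x' hx' hx'C v' hv' hv'n hv'K i
  have h1c : 1 + c = t := by simp only [hcdef]; ring
  rw [h1c] at hfin
  have htne : δx t ≠ 0 := hnz t (by linarith)
  have htp : (0:ℝ) < ‖δx t‖ := norm_pos_iff.2 htne
  calc ε ≤ K i (x t) (‖δx c‖⁻¹ • δx t) := hfin
    _ = K i (x t) (δx t) := hKhom i (x t) (δx t) htne _ (inv_pos.2 hnc)
    _ = K i (x t) (‖δx t‖⁻¹ • δx t) :=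
        (hKhom i (x t) (δx t) htne _ (inv_pos.2 htp)).symm
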